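/- arXiv:1712.00686 — 2 statements merged into one kernel-verified Lean document; each statement's English description precedes it below -/
import Mathlib

section
/- Let D be a finite multidigraph and let e=(u,v) be a non-loop arc of D such that D has no loop at u and no loop at v. Then σ(D;x) = σ(D_{-e};x) + x·σ(D_{/e};x) − x·σ(D_{†e};x). -/
open Classical

/-- A finite multidigraph: a finite set `V` of vertices (natural numbers),
a finite set `A` of arc identifiers, and a map `ends` assigning to each arc
identifier its (source, target) pair of vertices.  Parallel arcs are distinct
identifiers with the same endpoints; loops are arcs with equal endpoints. -/
structure MDigraph where
  V : Finset ℕ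
  A : Finset ℕ
  ends : ℕ → ℕ × ℕ

namespace MDigraph

/-- Every arc has both endpoints in the vertex set. -/
def WellFormed (D : MDigraph) : Prop :=
  ∀ a ∈ D.A, (D.ends a).1 ∈ D.V ∧ (D.ends a).2 ∈ D.V

/-- An arc is a loop if its source equals its target. -/
def IsLoop (D : MDigraph) (e : ℕ) : Prop := (D.ends e).1 = (D.ends e).2

/-- Arc deletion `D_{-e}`. -/
def delArc (D : MDigraph) (e : ℕ) : MDigraph := ⟨D.V, D.A.erase e, D.ends⟩

/-- Arc contraction `D_{/e}`.  For a non-loop arc `e = (u,v)`: merge `u` and `v`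
into a single vertex (named `u`), removing exactly the arcs of the form `(u,x)`
and `(y,v)`.  For a loop `e = (u,u)`: delete `u` together with all incident arcs. -/
noncomputable def contractArc (D : MDigraph) (e : ℕ) : MDigraph :=
  let u := (D.ends e).1
  let v := (D.ends e).2
  if u = v then
    ⟨D.V.erase u, D.A.filter (fun a => (D.ends a).1 ≠ u ∧ (D.ends a).2 ≠ u), D.ends⟩
  else
    ⟨D.V.erase v, D.A.filter (fun a => (D.ends a).1 ≠ u ∧ (D.ends a).2 ≠ v),
      fun a => ((if (D.ends a).1 = v then u else (D.ends a).1),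
                (if (D.ends a).2 = v then u else (D.ends a).2))⟩

/-- Arc extraction `D_{†e}`: delete both endpoints of `e` and all arcs incident to them. -/
noncomputable def extractArc (D : MDigraph) (e : ℕ) : MDigraph :=
  let u := (D.ends e).1
  let v := (D.ends e).2
  ⟨(D.V.erase u).erase v,
   D.A.filter (fun a =>
     (D.ends a).1 ≠ u ∧ (D.ends a).1 ≠ v ∧ (D.ends a).2 ≠ u ∧ (D.ends a).2 ≠ v),
   D.ends⟩

/-- Add one new arc with endpoints `p` (using a fresh arc identifier). -/
noncomputable def addArc (D : MDigraph) (p : ℕ × ℕ) : MDigraph :=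
  ⟨D.V, insert (D.A.sup id + 1) D.A, Function.update D.ends (D.A.sup id + 1) p⟩

/-- Vertex deletion `D_{-v}`. -/
noncomputable def delVertex (D : MDigraph) (v : ℕ) : MDigraph :=
  ⟨D.V.erase v, D.A.filter (fun a => (D.ends a).1 ≠ v ∧ (D.ends a).2 ≠ v), D.ends⟩

/-- Vertex contraction `D_{/v}`: delete `v`, and for every arc `(u,v)` into `v`
and every arc `(v,w)` out of `v` add a new arc `(u,w)`; thus the multiplicity of
a new arc `(u,w)` is the multiplicity of `(u,v)` times that of `(v,w)`. -/
noncomputable def contractVertex (D : MDigraph) (v : ℕ) : MDigraph :=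
  ⟨D.V.erase v,
   ((D.A.filter (fun a => (D.ends a).1 ≠ v ∧ (D.ends a).2 ≠ v)).image (fun a => 2 * a)) ∪
     (((D.A.filter (fun a => (D.ends a).2 = v)) ×ˢ (D.A.filter (fun a => (D.ends a).1 = v))).image
       (fun p => 2 * Nat.pair p.1 p.2 + 1)),
   fun n =>
     if n % 2 = 0 then D.ends (n / 2)
     else ((D.ends (Nat.unpair ((n - 1) / 2)).1).1, (D.ends (Nat.unpair ((n - 1) / 2)).2).2)⟩

/-- The arc-less digraph on `n` vertices. -/
def emptyD (n : ℕ) : MDigraph := ⟨Finset.range n, ∅, fun _ => (0, 0)⟩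

/-- Disjoint union of two multidigraphs (vertices and arcs relabelled evenly/oddly). -/
noncomputable def disjUnion (D₁ D₂ : MDigraph) : MDigraph :=
  ⟨(D₁.V.image (fun v => 2 * v)) ∪ (D₂.V.image (fun v => 2 * v + 1)),
   (D₁.A.image (fun a => 2 * a)) ∪ (D₂.A.image (fun a => 2 * a + 1)),
   fun n =>
     if n % 2 = 0 then (2 * (D₁.ends (n / 2)).1, 2 * (D₁.ends (n / 2)).2)
     else (2 * (D₂.ends (n / 2)).1 + 1, 2 * (D₂.ends (n / 2)).2 + 1)⟩

/-- Isomorphism of multidigraphs. -/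
def Iso (D₁ D₂ : MDigraph) : Prop :=
  ∃ φ ψ : ℕ → ℕ, Set.BijOn φ ↑D₁.V ↑D₂.V ∧ Set.BijOn ψ ↑D₁.A ↑D₂.A ∧
    ∀ a ∈ D₁.A, D₂.ends (ψ a) = (φ (D₁.ends a).1, φ (D₁.ends a).2)

/-- `C` is (the arc set of) a directed cycle of length `k` in `D`: `k` distinct arcs
forming a closed directed walk through `k` distinct vertices (`k ≥ 1`;
a loop is a directed cycle of length 1). -/
def IsCycle (D : MDigraph) (C : Finset ℕ) (k : ℕ) : Prop :=
  1 ≤ k ∧ ∃ v a : ℕ → ℕ,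
    (∀ i j, i < k → j < k → v i = v j → i = j) ∧
    (∀ i j, i < k → j < k → a i = a j → i = j) ∧
    (∀ i, i < k → a i ∈ D.A ∧ D.ends (a i) = (v i, v ((i + 1) % k))) ∧
    C = (Finset.range k).image a

/-- `P` is (the arc set of) a directed path of length `k` in `D`: `k` distinct arcs
forming a directed walk through `k+1` distinct vertices (`k ≥ 1`). -/
def IsPath (D : MDigraph) (P : Finset ℕ) (k : ℕ) : Prop :=
  1 ≤ k ∧ ∃ v a : ℕ → ℕ,
    (∀ i j, i ≤ k → j ≤ k → v i = v j → i = j) ∧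
    (∀ i j, i < k → j < k → a i = a j → i = j) ∧
    (∀ i, i < k → a i ∈ D.A ∧ D.ends (a i) = (v i, v (i + 1))) ∧
    P = (Finset.range k).image a

/-- Number `c_k(D)` of directed cycles of length `k`. -/
noncomputable def cycCount (D : MDigraph) (k : ℕ) : ℕ :=
  (D.A.powerset.filter (fun C => IsCycle D C k)).card

/-- Number `p_k(D)` of directed paths of length `k`. -/
noncomputable def pathCount (D : MDigraph) (k : ℕ) : ℕ :=
  (D.A.powerset.filter (fun P => IsPath D P k)).card

/-- The cycle polynomial `σ(D;x) = ∑_k c_k(D) x^k`. -/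
noncomputable def cyclePoly (D : MDigraph) : Polynomial ℝ :=
  ∑ k ∈ Finset.range (D.A.card + 1), (cycCount D k : ℝ) • Polynomial.X ^ k

/-- The path polynomial `π(D;x) = ∑_k p_k(D) x^k`. -/
noncomputable def pathPoly (D : MDigraph) : Polynomial ℝ :=
  ∑ k ∈ Finset.range (D.A.card + 1), (pathCount D k : ℝ) • Polynomial.X ^ k


/-- Out-degree of `v`: arcs with tail `v`, counted with multiplicity. -/
noncomputable def outDeg (D : MDigraph) (v : ℕ) : ℕ :=
  (D.A.filter (fun a => (D.ends a).1 = v)).card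

/-- In-degree of `v`: arcs with head `v`, counted with multiplicity. -/
noncomputable def inDeg (D : MDigraph) (v : ℕ) : ℕ :=
  (D.A.filter (fun a => (D.ends a).2 = v)).card

/-- `P` is a directed path of length `k` in `D` beginning at `v0`. -/
def IsPathFrom (D : MDigraph) (v0 : ℕ) (P : Finset ℕ) (k : ℕ) : Prop :=
  1 ≤ k ∧ ∃ v a : ℕ → ℕ, v 0 = v0 ∧
    (∀ i j, i ≤ k → j ≤ k → v i = v j → i = j) ∧
    (∀ i j, i < k → j < k → a i = a j → i = j) ∧
    (∀ i, i < k → a i ∈ D.A ∧ D.ends (a i) = (v i, v (i + 1))) ∧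
    P = (Finset.range k).image a

/-- `P` is a directed path of length `k` in `D` ending at `v0`. -/
def IsPathTo (D : MDigraph) (v0 : ℕ) (P : Finset ℕ) (k : ℕ) : Prop :=
  1 ≤ k ∧ ∃ v a : ℕ → ℕ, v k = v0 ∧
    (∀ i j, i ≤ k → j ≤ k → v i = v j → i = j) ∧
    (∀ i j, i < k → j < k → a i = a j → i = j) ∧
    (∀ i, i < k → a i ∈ D.A ∧ D.ends (a i) = (v i, v (i + 1))) ∧
    P = (Finset.range k).image a

/-- `p_k(D,v,+)`: number of directed paths of length `k` beginning at `v`. -/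
noncomputable def pathFromCount (D : MDigraph) (v : ℕ) (k : ℕ) : ℕ :=
  (D.A.powerset.filter (fun P => IsPathFrom D v P k)).card

/-- `p_k(D,v,−)`: number of directed paths of length `k` ending at `v`. -/
noncomputable def pathToCount (D : MDigraph) (v : ℕ) (k : ℕ) : ℕ :=
  (D.A.powerset.filter (fun P => IsPathTo D v P k)).card

/-- `π_{v+}(D;x) = ∑_k p_k(D,v,+) x^k`. -/
noncomputable def pathFromPoly (D : MDigraph) (v : ℕ) : Polynomial ℝ :=
  ∑ k ∈ Finset.range (D.A.card + 1), (pathFromCount D v k : ℝ) • Polynomial.X ^ k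

/-- `π_{v-}(D;x) = ∑_k p_k(D,v,−) x^k`. -/
noncomputable def pathToPoly (D : MDigraph) (v : ℕ) : Polynomial ℝ :=
  ∑ k ∈ Finset.range (D.A.card + 1), (pathToCount D v k : ℝ) • Polynomial.X ^ k

/-- In the spanning subgraph `D⟨F⟩`, every vertex has out-degree ≤ 1 and
in-degree ≤ 1; equivalently, every component of `D⟨F⟩` is a directed cycle,
a directed path, or an isolated vertex. -/
def DegOK (D : MDigraph) (F : Finset ℕ) : Prop :=
  ∀ w : ℕ, (F.filter (fun a => (D.ends a).1 = w)).card ≤ 1 ∧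
    (F.filter (fun a => (D.ends a).2 = w)).card ≤ 1

/-- `kc(D⟨F⟩)`: the number of components of the spanning subgraph `D⟨F⟩` that are
directed cycles (for degree-constrained `F`, these are exactly the directed
cycles contained in `F`). -/
noncomputable def kcF (D : MDigraph) (F : Finset ℕ) : ℕ :=
  (F.powerset.filter (fun C => ∃ k, IsCycle D C k)).card

/-- `kp(D⟨F⟩)`: the number of components of the spanning subgraph `D⟨F⟩` that are
directed paths with at least one arc (for degree-constrained `F`, counted by
their initial vertices: vertices that are the tail of an arc of `F` but the
head of no arc of `F`). -/
noncomputable def kpF (D : MDigraph) (F : Finset ℕ) : ℕ :=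
  ((F.image (fun a => (D.ends a).1)).filter
    (fun w => (F.filter (fun a => (D.ends a).2 = w)).card = 0)).card

/-- The number of vertices covered by (incident to) the arcs of `F`. -/
noncomputable def coveredCard (D : MDigraph) (F : Finset ℕ) : ℕ :=
  ((F.image (fun a => (D.ends a).1)) ∪ (F.image (fun a => (D.ends a).2))).card

/-- `k(D⟨F⟩)`: total number of connected components of the spanning subgraph
`D⟨F⟩` (isolated vertices included), for degree-constrained `F` in a
well-formed digraph. -/
noncomputable def kF (D : MDigraph) (F : Finset ℕ) : ℕ :=
  D.V.card - coveredCard D F + kcF D F + kpF D F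

/-- `c(D⟨F⟩)`: number of covered components (components with at least one arc). -/
noncomputable def cF (D : MDigraph) (F : Finset ℕ) : ℕ := kcF D F + kpF D F

/-- `c₁(D⟨F⟩)`: number of loops in `F`. -/
noncomputable def loopCount (D : MDigraph) (F : Finset ℕ) : ℕ :=
  (F.filter (fun a => (D.ends a).1 = (D.ends a).2)).card

/-- The bivariate cycle polynomial
`σ̂(D;x,y) = ∑_F x^{|F|} y^{kc(D⟨F⟩)}`, the sum being over all arc subsets `F`
such that every component of `D⟨F⟩` is a directed cycle or an isolated vertex. -/
noncomputable def biCycPoly (D : MDigraph) : MvPolynomial (Fin 2) ℝ :=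
  ∑ F ∈ D.A.powerset.filter (fun F => DegOK D F ∧ kpF D F = 0),
    MvPolynomial.X 0 ^ F.card * MvPolynomial.X 1 ^ kcF D F

/-- The bivariate path polynomial
`π̂(D;x,y) = ∑_F x^{|F|} y^{kp(D⟨F⟩)}`, the sum being over all arc subsets `F`
such that every component of `D⟨F⟩` is a directed path or an isolated vertex. -/
noncomputable def biPathPoly (D : MDigraph) : MvPolynomial (Fin 2) ℝ :=
  ∑ F ∈ D.A.powerset.filter (fun F => DegOK D F ∧ kcF D F = 0),
    MvPolynomial.X 0 ^ F.card * MvPolynomial.X 1 ^ kpF D F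

/-- The trivariate cycle-path polynomial
`σ̂π(D;x,y,z) = ∑_F x^{|F|} y^{kc(D⟨F⟩)} z^{kp(D⟨F⟩)}`, the sum being over all
arc subsets `F` in which every vertex has in- and out-degree at most 1. -/
noncomputable def triPoly (D : MDigraph) : MvPolynomial (Fin 3) ℝ :=
  ∑ F ∈ D.A.powerset.filter (fun F => DegOK D F),
    MvPolynomial.X 0 ^ F.card * MvPolynomial.X 1 ^ kcF D F * MvPolynomial.X 2 ^ kpF D F

/-- The geometric cover polynomial `C̃(D;x,y) = ∑_{i,j} c_{i,j}(D) x^i y^j`,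
where `c_{i,j}(D)` is the number of ways of disjointly covering all vertices of
`D` with `i` directed paths and `j` directed cycles (isolated vertices counting
as paths of length 0): a cover is an arc subset `F` with all in- and out-degrees
at most 1, contributing `j = kc(D⟨F⟩)` cycles and
`i = kp(D⟨F⟩) + (number of uncovered vertices)` paths. -/
noncomputable def geomCover (D : MDigraph) (x y : ℝ) : ℝ :=
  ∑ F ∈ D.A.powerset.filter (fun F => DegOK D F),
    x ^ (kpF D F + (D.V.card - coveredCard D F)) * y ^ kcF D F

/-- No vertex is incident both to an arc of `A` and to an arc of `B`. -/
def NoCommonVertex (D : MDigraph) (A B : Finset ℕ) : Prop :=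
  ∀ a ∈ A, ∀ b ∈ B,
    (D.ends a).1 ≠ (D.ends b).1 ∧ (D.ends a).1 ≠ (D.ends b).2 ∧
    (D.ends a).2 ≠ (D.ends b).1 ∧ (D.ends a).2 ≠ (D.ends b).2

/-- The explicit polynomial
`N(D;x,y,z) = ∑_{(A,B)} x^{k(D⟨A∪B⟩)−c(D⟨B⟩)−c₁(D⟨A⟩)} y^{|A|+|B|−c(D⟨B⟩)} z^{c(D⟨B⟩)}`,
summing over pairs of disjoint arc subsets `A, B` sharing no vertex such that
every component of `D⟨A∪B⟩` is a directed cycle, a directed path or an isolated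
vertex. -/
noncomputable def NPoly (D : MDigraph) : MvPolynomial (Fin 3) ℝ :=
  ∑ p ∈ (D.A.powerset ×ˢ D.A.powerset).filter
      (fun p => Disjoint p.1 p.2 ∧ NoCommonVertex D p.1 p.2 ∧ DegOK D (p.1 ∪ p.2)),
    MvPolynomial.X 0 ^ (kF D (p.1 ∪ p.2) - cF D p.2 - loopCount D p.1) *
      MvPolynomial.X 1 ^ (p.1.card + p.2.card - cF D p.2) *
      MvPolynomial.X 2 ^ cF D p.2

end MDigraph

/-- A finite undirected graph: a finite vertex set and a finite set of
unordered pairs as edges. -/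
structure SGraph where
  V : Finset ℕ
  E : Finset (Sym2 ℕ)

namespace SGraph

/-- `G` is a simple graph: no loops, and all edge endpoints are vertices. -/
def Simple (G : SGraph) : Prop :=
  (∀ s ∈ G.E, ¬ s.IsDiag) ∧ ∀ s ∈ G.E, ∀ a ∈ s, a ∈ G.V

/-- `P` is (the edge set of) an undirected path of length `k` in `G`. -/
def IsUPath (G : SGraph) (P : Finset (Sym2 ℕ)) (k : ℕ) : Prop :=
  1 ≤ k ∧ ∃ v : ℕ → ℕ,
    (∀ i j, i ≤ k → j ≤ k → v i = v j → i = j) ∧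
    (∀ i, i < k → s(v i, v (i + 1)) ∈ G.E) ∧
    P = (Finset.range k).image (fun i => s(v i, v (i + 1)))

/-- `C` is (the edge set of) an undirected cycle of length `k ≥ 3` in `G`. -/
def IsUCycle (G : SGraph) (C : Finset (Sym2 ℕ)) (k : ℕ) : Prop :=
  3 ≤ k ∧ ∃ v : ℕ → ℕ,
    (∀ i j, i < k → j < k → v i = v j → i = j) ∧
    (∀ i, i < k → s(v i, v ((i + 1) % k)) ∈ G.E) ∧
    C = (Finset.range k).image (fun i => s(v i, v ((i + 1) % k)))

/-- `p_k(G)`: number of undirected paths of length `k` in `G`. -/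
noncomputable def uPathCount (G : SGraph) (k : ℕ) : ℕ :=
  (G.E.powerset.filter (fun P => IsUPath G P k)).card

/-- `c_k(G)`: number of undirected cycles of length `k` in `G`. -/
noncomputable def uCycCount (G : SGraph) (k : ℕ) : ℕ :=
  (G.E.powerset.filter (fun C => IsUCycle G C k)).card

/-- `π(G;x) = ∑_k p_k(G) x^k`. -/
noncomputable def uPathPoly (G : SGraph) : Polynomial ℝ :=
  ∑ k ∈ Finset.range (G.E.card + 1), (uPathCount G k : ℝ) • Polynomial.X ^ k

/-- `σ(G;x) = ∑_k c_k(G) x^k`. -/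
noncomputable def uCycPoly (G : SGraph) : Polynomial ℝ :=
  ∑ k ∈ Finset.range (G.E.card + 1), (uCycCount G k : ℝ) • Polynomial.X ^ k

/-- The digraph `D(G)` obtained from `G` by replacing each edge `{u,v}` by the
two oppositely oriented arcs `(u,v)` and `(v,u)`. -/
noncomputable def toDigraph (G : SGraph) : MDigraph :=
  ⟨G.V, ((G.V ×ˢ G.V).filter (fun p => s(p.1, p.2) ∈ G.E)).image (fun p => Nat.pair p.1 p.2),
   Nat.unpair⟩

end SGraph


namespace MDigraph

lemma cycCount_zero (D : MDigraph) : cycCount D 0 = 0 := by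
  rw [cycCount, Finset.card_eq_zero, Finset.filter_eq_empty_iff]
  rintro C _ ⟨hk, -⟩
  omega

lemma cycCount_eq_zero_aux {D : MDigraph} {k : ℕ} (h : D.A.card < k) : cycCount D k = 0 := by
  rw [cycCount, Finset.card_eq_zero, Finset.filter_eq_empty_iff]
  rintro C hC ⟨hk, v, a, hv, ha, hmem, hCeq⟩
  rw [Finset.mem_powerset] at hC
  have hcard : C.card = k := by
    rw [hCeq, Finset.card_image_of_injOn, Finset.card_range]
    intro i hi j hj hij
    exact ha i j (Finset.mem_range.1 hi) (Finset.mem_range.1 hj) hij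
  have := Finset.card_le_card hC
  omega

lemma cyclePoly_ext_aux {D : MDigraph} {N : ℕ} (h : D.A.card ≤ N) :
    D.cyclePoly = ∑ k ∈ Finset.range (N + 1), (cycCount D k : ℝ) • Polynomial.X ^ k := by
  rw [cyclePoly]
  apply Finset.sum_subset (Finset.range_subset_range.2 (by omega))
  intro k hk hk'
  rw [Finset.mem_range, not_lt] at hk'
  rw [cycCount_eq_zero_aux (by omega)]
  simp

lemma rot_inj {k i j t : ℕ} (hi : i < k) (hj : j < k)
    (h : (i + t) % k = (j + t) % k) : i = j := by
  have h1 : i ≡ j [MOD k] := Nat.ModEq.add_right_cancel' t h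
  rwa [Nat.ModEq, Nat.mod_eq_of_lt hi, Nat.mod_eq_of_lt hj] at h1

lemma image_rot {k t : ℕ} (hk : 0 < k) (f : ℕ → ℕ) :
    (Finset.range k).image (fun i => f ((i + t) % k)) = (Finset.range k).image f := by
  apply Finset.Subset.antisymm
  · intro x hx
    simp only [Finset.mem_image, Finset.mem_range] at hx ⊢
    obtain ⟨i, hi, rfl⟩ := hx
    exact ⟨(i + t) % k, Nat.mod_lt _ hk, rfl⟩
  · intro x hx
    simp only [Finset.mem_image, Finset.mem_range] at hx ⊢
    obtain ⟨i, hi, rfl⟩ := hx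
    refine ⟨(i + (k - t % k)) % k, Nat.mod_lt _ hk, ?_⟩
    congr 1
    have hd := Nat.div_add_mod t k
    have ht : t % k < k := Nat.mod_lt _ hk
    rw [Nat.mod_add_mod]
    have he : i + (k - t % k) + t = i + k + k * (t / k) := by omega
    rw [he, Nat.add_mul_mod_self_left, Nat.add_mod_right, Nat.mod_eq_of_lt hi]

lemma erase_image {k : ℕ} {f : ℕ → ℕ}
    (hinj : ∀ i j, i < k + 1 → j < k + 1 → f i = f j → i = j) :
    ((Finset.range (k + 1)).image f).erase (f k) = (Finset.range k).image f := by
  ext x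
  simp only [Finset.mem_erase, Finset.mem_image, Finset.mem_range]
  constructor
  · rintro ⟨hne, i, hi, rfl⟩
    refine ⟨i, ?_, rfl⟩
    rcases Nat.lt_succ_iff_lt_or_eq.1 hi with h | rfl
    · exact h
    · exact absurd rfl hne
  · rintro ⟨i, hi, rfl⟩
    refine ⟨fun h => ?_, i, by omega, rfl⟩
    have := hinj i k (by omega) (by omega) h
    omega

lemma filter_split_card (s : Finset (Finset ℕ)) (P Q : Finset ℕ → Prop) :
    (s.filter P).card
      = (s.filter (fun x => P x ∧ Q x)).card + (s.filter (fun x => P x ∧ ¬ Q x)).card := by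
  classical
  rw [← Finset.filter_filter, ← Finset.filter_filter]
  exact (Finset.card_filter_add_card_filter_not (s := s.filter P) (p := Q)).symm

lemma contractArc_def {D : MDigraph} {e : ℕ} (hnl : ¬ D.IsLoop e) :
    D.contractArc e =
      ⟨D.V.erase (D.ends e).2,
       D.A.filter (fun a => (D.ends a).1 ≠ (D.ends e).1 ∧ (D.ends a).2 ≠ (D.ends e).2),
       fun a => ((if (D.ends a).1 = (D.ends e).2 then (D.ends e).1 else (D.ends a).1),
                 (if (D.ends a).2 = (D.ends e).2 then (D.ends e).1 else (D.ends a).2))⟩ := by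
  simp only [contractArc]
  split
  · exact absurd (by assumption) hnl
  · rfl

lemma contract_A {D : MDigraph} {e : ℕ} (hnl : ¬ D.IsLoop e) :
    (D.contractArc e).A
      = D.A.filter (fun a => (D.ends a).1 ≠ (D.ends e).1 ∧ (D.ends a).2 ≠ (D.ends e).2) := by
  rw [contractArc_def hnl]

lemma contract_ends {D : MDigraph} {e : ℕ} (hnl : ¬ D.IsLoop e) (a : ℕ) :
    (D.contractArc e).ends a =
      ((if (D.ends a).1 = (D.ends e).2 then (D.ends e).1 else (D.ends a).1),
       (if (D.ends a).2 = (D.ends e).2 then (D.ends e).1 else (D.ends a).2)) := by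
  rw [contractArc_def hnl]

lemma extract_A (D : MDigraph) (e : ℕ) :
    (D.extractArc e).A = D.A.filter (fun a =>
      (D.ends a).1 ≠ (D.ends e).1 ∧ (D.ends a).1 ≠ (D.ends e).2 ∧
      (D.ends a).2 ≠ (D.ends e).1 ∧ (D.ends a).2 ≠ (D.ends e).2) := rfl

lemma extract_ends (D : MDigraph) (e : ℕ) : (D.extractArc e).ends = D.ends := rfl

lemma rotate_cycle {E : MDigraph} {k : ℕ} (t : ℕ) (hk : 0 < k) {v a : ℕ → ℕ}
    (hv : ∀ i j, i < k → j < k → v i = v j → i = j)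
    (ha : ∀ i j, i < k → j < k → a i = a j → i = j)
    (hm : ∀ i, i < k → a i ∈ E.A ∧ E.ends (a i) = (v i, v ((i + 1) % k))) :
    (∀ i j, i < k → j < k → v ((i + t) % k) = v ((j + t) % k) → i = j) ∧
    (∀ i j, i < k → j < k → a ((i + t) % k) = a ((j + t) % k) → i = j) ∧
    (∀ i, i < k → a ((i + t) % k) ∈ E.A ∧
      E.ends (a ((i + t) % k)) = (v ((i + t) % k), v (((i + 1) % k + t) % k))) ∧
    (Finset.range k).image (fun i => a ((i + t) % k)) = (Finset.range k).image a := by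
  refine ⟨fun i j hi hj h => rot_inj hi hj (hv _ _ (Nat.mod_lt _ hk) (Nat.mod_lt _ hk) h),
          fun i j hi hj h => rot_inj hi hj (ha _ _ (Nat.mod_lt _ hk) (Nat.mod_lt _ hk) h),
          ?_, image_rot hk a⟩
  intro i hi
  refine ⟨(hm _ (Nat.mod_lt _ hk)).1, ?_⟩
  rw [(hm _ (Nat.mod_lt _ hk)).2]
  congr 2
  rw [Nat.mod_add_mod, Nat.mod_add_mod, Nat.add_right_comm]

lemma shift_sum (f : ℕ → ℕ) (n : ℕ) :
    (Polynomial.X : Polynomial ℝ) * ∑ k ∈ Finset.range n, (f k : ℝ) • Polynomial.X ^ k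
      = ∑ k ∈ Finset.range (n + 1),
          (if k = 0 then (0 : ℝ) else (f (k - 1) : ℝ)) • Polynomial.X ^ k := by
  rw [Finset.sum_range_succ', Finset.mul_sum]
  have h0 : (if (0 : ℕ) = 0 then (0 : ℝ) else (f (0 - 1) : ℝ))
        • (Polynomial.X : Polynomial ℝ) ^ (0 : ℕ) = 0 := by simp
  rw [h0, add_zero]
  apply Finset.sum_congr rfl
  intro k _
  rw [if_neg (Nat.succ_ne_zero k), Nat.add_sub_cancel, mul_smul_comm, ← pow_succ']

lemma count_del (D : MDigraph) (e : ℕ) (k : ℕ) :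
    cycCount D k = cycCount (D.delArc e) k
      + (D.A.powerset.filter (fun C => IsCycle D C k ∧ e ∈ C)).card := by
  have hdisj : Disjoint ((D.delArc e).A.powerset.filter (fun C => IsCycle (D.delArc e) C k))
      (D.A.powerset.filter (fun C => IsCycle D C k ∧ e ∈ C)) := by
    rw [Finset.disjoint_left]
    intro C h1 h2
    rw [Finset.mem_filter, Finset.mem_powerset] at h1 h2
    exact (Finset.mem_erase.1 (h1.1 h2.2.2)).1 rfl
  have key : D.A.powerset.filter (fun C => IsCycle D C k)
      = ((D.delArc e).A.powerset.filter (fun C => IsCycle (D.delArc e) C k))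
        ∪ (D.A.powerset.filter (fun C => IsCycle D C k ∧ e ∈ C)) := by
    ext C
    simp only [Finset.mem_union, Finset.mem_filter, Finset.mem_powerset]
    constructor
    · rintro ⟨hsub, hcyc⟩
      by_cases heC : e ∈ C
      · exact Or.inr ⟨hsub, hcyc, heC⟩
      · left
        obtain ⟨hk, v, a, hv, ha, hm, hCeq⟩ := hcyc
        have hsub' : C ⊆ (D.delArc e).A := fun c hc =>
          Finset.mem_erase.2 ⟨fun h => heC (h ▸ hc), hsub hc⟩
        refine ⟨hsub', hk, v, a, hv, ha, fun i hi => ⟨?_, (hm i hi).2⟩, hCeq⟩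
        apply hsub'
        rw [hCeq]
        exact Finset.mem_image_of_mem a (Finset.mem_range.2 hi)
    · rintro (⟨hsub, hk, v, a, hv, ha, hm, hCeq⟩ | ⟨hsub, hcyc, -⟩)
      · exact ⟨fun c hc => Finset.mem_of_mem_erase (hsub hc),
          hk, v, a, hv, ha, fun i hi => ⟨Finset.mem_of_mem_erase (hm i hi).1, (hm i hi).2⟩, hCeq⟩
      · exact ⟨hsub, hcyc⟩
  rw [cycCount, key, Finset.card_union_of_disjoint hdisj, cycCount]

lemma count_con (D : MDigraph) (e : ℕ) (hnl : ¬ D.IsLoop e) (k : ℕ) :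
    cycCount (D.contractArc e) k = cycCount (D.extractArc e) k
      + ((D.contractArc e).A.powerset.filter (fun C => IsCycle (D.contractArc e) C k ∧
          ∃ b ∈ C, ((D.contractArc e).ends b).1 = (D.ends e).1)).card := by
  have huv : (D.ends e).1 ≠ (D.ends e).2 := hnl
  have hdisj : Disjoint ((D.extractArc e).A.powerset.filter (fun C => IsCycle (D.extractArc e) C k))
      ((D.contractArc e).A.powerset.filter (fun C => IsCycle (D.contractArc e) C k ∧
          ∃ b ∈ C, ((D.contractArc e).ends b).1 = (D.ends e).1)) := by
    rw [Finset.disjoint_left]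
    intro C h1 h2
    rw [Finset.mem_filter, Finset.mem_powerset] at h1 h2
    obtain ⟨b, hbC, hbu⟩ := h2.2.2
    have hb := h1.1 hbC
    rw [extract_A, Finset.mem_filter] at hb
    obtain ⟨-, h1u, h1v, -, -⟩ := hb
    rw [contract_ends hnl b] at hbu
    simp only [if_neg h1v] at hbu
    exact h1u hbu
  have key : (D.contractArc e).A.powerset.filter (fun C => IsCycle (D.contractArc e) C k)
      = ((D.extractArc e).A.powerset.filter (fun C => IsCycle (D.extractArc e) C k))
        ∪ ((D.contractArc e).A.powerset.filter (fun C => IsCycle (D.contractArc e) C k ∧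
            ∃ b ∈ C, ((D.contractArc e).ends b).1 = (D.ends e).1)) := by
    ext C
    simp only [Finset.mem_union, Finset.mem_filter, Finset.mem_powerset]
    constructor
    · rintro ⟨hsub, hcyc⟩
      by_cases hex : ∃ b ∈ C, ((D.contractArc e).ends b).1 = (D.ends e).1
      · exact Or.inr ⟨hsub, hcyc, hex⟩
      · left
        obtain ⟨hk, w, b, hw, hb, hm, hCeq⟩ := hcyc
        have hnex' : ∀ c ∈ C, ((D.contractArc e).ends c).1 ≠ (D.ends e).1 := by
          intro c hc hcu
          exact hex ⟨c, hc, hcu⟩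
        have hbC : ∀ i, i < k → b i ∈ C := by
          intro i hi
          rw [hCeq]
          exact Finset.mem_image_of_mem b (Finset.mem_range.2 hi)
        have hwu : ∀ i, i < k → w i ≠ (D.ends e).1 := by
          intro i hi
          have h2 := hnex' (b i) (hbC i hi)
          rw [(hm i hi).2] at h2
          exact h2
        have key2 : ∀ i, i < k →
            b i ∈ (D.extractArc e).A ∧ D.ends (b i) = (w i, w ((i + 1) % k)) := by
          intro i hi
          have hmem := (hm i hi).1
          rw [contract_A hnl, Finset.mem_filter] at hmem
          obtain ⟨hA, ht, hh⟩ := hmem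
          have hce := (hm i hi).2
          rw [contract_ends hnl] at hce
          have hc1 := congrArg Prod.fst hce
          have hc2 := congrArg Prod.snd hce
          simp only [] at hc1 hc2
          have hi1 : (i + 1) % k < k := Nat.mod_lt _ (by omega)
          have hwu2 := hwu _ hi1
          have h1 : (D.ends (b i)).1 = w i ∧ (D.ends (b i)).1 ≠ (D.ends e).2 := by
            by_cases hc : (D.ends (b i)).1 = (D.ends e).2
            · rw [if_pos hc] at hc1
              exact absurd hc1.symm (hwu i hi)
            · rw [if_neg hc] at hc1
              exact ⟨hc1, hc⟩
          have h2 : (D.ends (b i)).2 = w ((i + 1) % k) ∧ (D.ends (b i)).2 ≠ (D.ends e).2 := by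
            by_cases hc : (D.ends (b i)).2 = (D.ends e).2
            · rw [if_pos hc] at hc2
              exact absurd hc2.symm hwu2
            · rw [if_neg hc] at hc2
              exact ⟨hc2, hc⟩
          refine ⟨?_, ?_⟩
          · rw [extract_A, Finset.mem_filter]
            refine ⟨hA, ?_, h1.2, ?_, h2.2⟩
            · rw [h1.1]; exact hwu i hi
            · rw [h2.1]; exact hwu2
          · rw [Prod.ext_iff]
            exact ⟨h1.1, h2.1⟩
        refine ⟨?_, hk, w, b, hw, hb, fun i hi => ⟨(key2 i hi).1, (key2 i hi).2⟩, hCeq⟩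
        intro c hc
        rw [hCeq] at hc
        obtain ⟨i, hi, rfl⟩ := Finset.mem_image.1 hc
        exact (key2 i (Finset.mem_range.1 hi)).1
    · rintro (⟨hsub, hk, w, b, hw, hb, hm, hCeq⟩ | ⟨hsub, hcyc, -⟩)
      · have key2 : ∀ i, i < k → b i ∈ (D.contractArc e).A ∧
            (D.contractArc e).ends (b i) = (w i, w ((i + 1) % k)) := by
          intro i hi
          obtain ⟨hmem, hend⟩ := hm i hi
          rw [extract_A, Finset.mem_filter] at hmem
          obtain ⟨hA, h1u, h1v, h2u, h2v⟩ := hmem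
          have hend' : D.ends (b i) = (w i, w ((i + 1) % k)) := hend
          refine ⟨?_, ?_⟩
          · rw [contract_A hnl, Finset.mem_filter]
            exact ⟨hA, h1u, h2v⟩
          · rw [contract_ends hnl, if_neg h1v, if_neg h2v, hend']
        refine ⟨?_, hk, w, b, hw, hb, fun i hi => key2 i hi, hCeq⟩
        intro c hc
        rw [hCeq] at hc
        obtain ⟨i, hi, rfl⟩ := Finset.mem_image.1 hc
        exact (key2 i (Finset.mem_range.1 hi)).1
      · exact ⟨hsub, hcyc⟩
  rw [cycCount, key, Finset.card_union_of_disjoint hdisj, cycCount]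

lemma count_bij (D : MDigraph) (e : ℕ) (he : e ∈ D.A) (hnl : ¬ D.IsLoop e) (k : ℕ) :
    (D.A.powerset.filter (fun C => IsCycle D C (k + 1) ∧ e ∈ C)).card
      = ((D.contractArc e).A.powerset.filter (fun C => IsCycle (D.contractArc e) C k ∧
          ∃ b ∈ C, ((D.contractArc e).ends b).1 = (D.ends e).1)).card := by
  have huv : (D.ends e).1 ≠ (D.ends e).2 := hnl
  have henotcon : e ∉ (D.contractArc e).A := by
    rw [contract_A hnl, Finset.mem_filter]
    rintro ⟨-, h, -⟩
    exact h rfl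
  have hconsub : (D.contractArc e).A ⊆ D.A := by
    rw [contract_A hnl]
    exact Finset.filter_subset _ _
  apply Finset.card_bij (fun C _ => C.erase e)
  · -- forward: image lands in the target set
    intro C hC
    rw [Finset.mem_filter, Finset.mem_powerset] at hC
    obtain ⟨hsub, ⟨-, v0, a0, hv0, ha0, hm0, hCeq⟩, heC⟩ := hC
    have hje : ∃ j, j < k + 1 ∧ a0 j = e := by
      rw [hCeq] at heC
      obtain ⟨j, hj, hj2⟩ := Finset.mem_image.1 heC
      exact ⟨j, Finset.mem_range.1 hj, hj2⟩
    obtain ⟨j, hj, hje⟩ := hje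
    have hK : 0 < k + 1 := Nat.succ_pos k
    obtain ⟨hva, haa, hmaa, himg⟩ := rotate_cycle (j + 1) hK hv0 ha0 hm0
    have haaK : a0 ((k + (j + 1)) % (k + 1)) = e := by
      have h1 : (k + (j + 1)) % (k + 1) = j := by
        rw [show k + (j + 1) = (k + 1) + j by omega, Nat.add_mod_left, Nat.mod_eq_of_lt hj]
      rw [h1, hje]
    have hends_e := (hmaa k (by omega)).2
    rw [haaK] at hends_e
    have hvk : v0 ((k + (j + 1)) % (k + 1)) = (D.ends e).1 := by rw [hends_e]
    have hv0' : v0 (((k + 1) % (k + 1) + (j + 1)) % (k + 1)) = (D.ends e).2 := by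
      rw [hends_e]
    rw [Nat.mod_self] at hv0'
    have hk0 : 0 < k := by
      rcases Nat.eq_zero_or_pos k with rfl | h
      · exact absurd (hvk.symm.trans hv0') huv
      · exact h
    have hCimg : C = (Finset.range (k + 1)).image (fun i => a0 ((i + (j + 1)) % (k + 1))) := by
      rw [hCeq]
      exact himg.symm
    have herase : C.erase e
        = (Finset.range k).image (fun i => a0 ((i + (j + 1)) % (k + 1))) := by
      rw [hCimg, show e = a0 ((k + (j + 1)) % (k + 1)) from haaK.symm]
      exact erase_image (f := fun i => a0 ((i + (j + 1)) % (k + 1))) haa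
    have hmem_con : ∀ i, i < k → a0 ((i + (j + 1)) % (k + 1)) ∈ (D.contractArc e).A := by
      intro i hi
      rw [contract_A hnl, Finset.mem_filter]
      have hm2 := (hmaa i (by omega)).2
      refine ⟨(hmaa i (by omega)).1, ?_, ?_⟩
      · rw [hm2]
        intro hcon
        have := hva i k (by omega) (by omega) (hcon.trans hvk.symm)
        omega
      · rw [hm2]
        intro hcon
        have h5 := hva ((i + 1) % (k + 1)) 0 (Nat.mod_lt _ hK) hK (hcon.trans hv0'.symm)
        rw [Nat.mod_eq_of_lt (show i + 1 < k + 1 by omega)] at h5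
        omega
    have hsub' : C.erase e ⊆ (D.contractArc e).A := by
      rw [herase]
      intro c hc
      obtain ⟨i, hi, rfl⟩ := Finset.mem_image.1 hc
      exact hmem_con i (Finset.mem_range.1 hi)
    rw [Finset.mem_filter, Finset.mem_powerset]
    refine ⟨hsub', ⟨hk0,
      fun i => if v0 ((i + (j + 1)) % (k + 1)) = (D.ends e).2 then (D.ends e).1
               else v0 ((i + (j + 1)) % (k + 1)),
      fun i => a0 ((i + (j + 1)) % (k + 1)), ?_, ?_, ?_, herase⟩, ?_⟩
    · intro i i' hi hi' h
      dsimp only at h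
      by_cases c1 : v0 ((i + (j + 1)) % (k + 1)) = (D.ends e).2 <;>
        by_cases c2 : v0 ((i' + (j + 1)) % (k + 1)) = (D.ends e).2
      · exact hva i i' (by omega) (by omega) (c1.trans c2.symm)
      · rw [if_pos c1, if_neg c2] at h
        exact absurd (hva i' k (by omega) (by omega) (h.symm.trans hvk.symm)) (by omega)
      · rw [if_neg c1, if_pos c2] at h
        exact absurd (hva i k (by omega) (by omega) (h.trans hvk.symm)) (by omega)
      · rw [if_neg c1, if_neg c2] at h
        exact hva i i' (by omega) (by omega) h
    · exact fun i i' hi hi' h => haa i i' (by omega) (by omega) h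
    · intro i hi
      refine ⟨hmem_con i hi, ?_⟩
      rw [contract_ends hnl]
      have hm2 := (hmaa i (by omega)).2
      have hc1 : (D.ends (a0 ((i + (j + 1)) % (k + 1)))).1
          = v0 ((i + (j + 1)) % (k + 1)) := by rw [hm2]
      have hc2 : (D.ends (a0 ((i + (j + 1)) % (k + 1)))).2
          = v0 (((i + 1) % (k + 1) + (j + 1)) % (k + 1)) := by rw [hm2]
      rw [hc1, hc2]
      dsimp only
      rcases Nat.lt_or_ge (i + 1) k with hik | hik
      · rw [Nat.mod_eq_of_lt (show i + 1 < k + 1 by omega), Nat.mod_eq_of_lt hik]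
      · have hik' : k = i + 1 := by omega
        subst hik'
        rw [Nat.mod_self, Nat.mod_eq_of_lt (show i + 1 < i + 1 + 1 by omega), hvk, hv0',
            if_neg huv, if_pos rfl]
    · refine ⟨a0 ((0 + (j + 1)) % (k + 1)), ?_, ?_⟩
      · rw [herase]
        exact Finset.mem_image_of_mem _ (Finset.mem_range.2 hk0)
      · rw [contract_ends hnl]
        have hc1 : (D.ends (a0 ((0 + (j + 1)) % (k + 1)))).1
            = v0 ((0 + (j + 1)) % (k + 1)) := by rw [(hmaa 0 hK).2]
        dsimp only
        rw [hc1, hv0', if_pos rfl]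
  · -- injectivity
    intro C1 h1 C2 h2 h
    rw [Finset.mem_filter] at h1 h2
    rw [← Finset.insert_erase h1.2.2, ← Finset.insert_erase h2.2.2, h]
  · -- surjectivity
    intro C' hC'
    rw [Finset.mem_filter, Finset.mem_powerset] at hC'
    obtain ⟨hsub, ⟨hk1, w0, b0, hw0, hb0, hm0, hC'eq⟩, bex, hbexC, hbexu⟩ := hC'
    have henotC' : e ∉ C' := fun h => henotcon (hsub h)
    have hk0 : 0 < k := hk1
    rw [hC'eq] at hbexC
    obtain ⟨j, hjr, hjb⟩ := Finset.mem_image.1 hbexC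
    have hj : j < k := Finset.mem_range.1 hjr
    obtain ⟨hw, hb, hm, himg⟩ := rotate_cycle j hk0 hw0 hb0 hm0
    have hju : w0 ((0 + j) % k) = (D.ends e).1 := by
      have h2 := (hm0 j hj).2
      rw [hjb] at h2
      have h3 : w0 j = (D.ends e).1 := by rw [← hbexu, h2]
      rw [show (0 + j) % k = j from by rw [Nat.zero_add, Nat.mod_eq_of_lt hj]]
      exact h3
    have hmc : ∀ i, i < k → b0 ((i + j) % k) ∈ D.A ∧
        (D.ends (b0 ((i + j) % k))).1 ≠ (D.ends e).1 ∧
        (D.ends (b0 ((i + j) % k))).2 ≠ (D.ends e).2 := by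
      intro i hi
      have h4 := (hm i hi).1
      rw [contract_A hnl, Finset.mem_filter] at h4
      exact h4
    have hce : ∀ i, i < k →
        (if (D.ends (b0 ((i + j) % k))).1 = (D.ends e).2 then (D.ends e).1
          else (D.ends (b0 ((i + j) % k))).1) = w0 ((i + j) % k) ∧
        (if (D.ends (b0 ((i + j) % k))).2 = (D.ends e).2 then (D.ends e).1
          else (D.ends (b0 ((i + j) % k))).2) = w0 (((i + 1) % k + j) % k) := by
      intro i hi
      have h4 := (hm i hi).2
      rw [contract_ends hnl] at h4
      exact ⟨congrArg Prod.fst h4, congrArg Prod.snd h4⟩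
    have hwnv : ∀ i, i < k → w0 ((i + j) % k) ≠ (D.ends e).2 := by
      intro i hi hcon
      have h5 := (hce i hi).1
      by_cases hc : (D.ends (b0 ((i + j) % k))).1 = (D.ends e).2
      · rw [if_pos hc] at h5
        exact huv (h5.trans hcon)
      · rw [if_neg hc] at h5
        exact hc (h5.trans hcon)
    have hwu0 : ∀ i, i < k → w0 ((i + j) % k) = (D.ends e).1 → i = 0 := by
      intro i hi hcon
      exact hw i 0 hi hk0 (hcon.trans hju.symm)
    have hT : ∀ i, i < k → (D.ends (b0 ((i + j) % k))).1
        = (if i = 0 then (D.ends e).2 else w0 ((i + j) % k)) := by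
      intro i hi
      have h5 := (hce i hi).1
      by_cases hi0 : i = 0
      · subst hi0
        rw [if_pos rfl]
        by_cases hc : (D.ends (b0 ((0 + j) % k))).1 = (D.ends e).2
        · exact hc
        · rw [if_neg hc] at h5
          exact absurd (h5.trans hju) (hmc 0 hi).2.1
      · rw [if_neg hi0]
        by_cases hc : (D.ends (b0 ((i + j) % k))).1 = (D.ends e).2
        · rw [if_pos hc] at h5
          exact absurd (hwu0 i hi h5.symm) hi0
        · rw [if_neg hc] at h5
          exact h5
    have hH : ∀ i, i < k → (D.ends (b0 ((i + j) % k))).2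
        = (if i + 1 = k then (D.ends e).1 else w0 ((i + 1 + j) % k)) := by
      intro i hi
      have h5 := (hce i hi).2
      rw [if_neg (hmc i hi).2.2] at h5
      by_cases hik : i + 1 = k
      · rw [if_pos hik]
        rw [hik, Nat.mod_self] at h5
        exact h5.trans hju
      · rw [if_neg hik]
        rw [Nat.mod_eq_of_lt (show i + 1 < k by omega)] at h5
        exact h5
    refine ⟨insert e C', ?_, Finset.erase_insert henotC'⟩
    rw [Finset.mem_filter, Finset.mem_powerset]
    refine ⟨?_, ⟨by omega,
      fun i => if i = 0 then (D.ends e).2 else if i = k then (D.ends e).1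
               else w0 ((i + j) % k),
      fun i => if i = k then e else b0 ((i + j) % k), ?_, ?_, ?_, ?_⟩,
      Finset.mem_insert_self e C'⟩
    · intro c hc
      rcases Finset.mem_insert.1 hc with rfl | hc'
      · exact he
      · exact hconsub (hsub hc')
    · -- vertex injectivity
      intro i i' hi hi' h
      dsimp only at h
      by_cases h10 : i = 0 <;> by_cases h20 : i' = 0
      · omega
      · exfalso
        rw [if_pos h10, if_neg h20] at h
        by_cases h2k : i' = k
        · rw [if_pos h2k] at h
          exact huv h.symm
        · rw [if_neg h2k] at h
          exact hwnv i' (by omega) h.symm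
      · exfalso
        rw [if_neg h10, if_pos h20] at h
        by_cases h1k : i = k
        · rw [if_pos h1k] at h
          exact huv h
        · rw [if_neg h1k] at h
          exact hwnv i (by omega) h
      · rw [if_neg h10, if_neg h20] at h
        by_cases h1k : i = k <;> by_cases h2k : i' = k
        · omega
        · exfalso
          rw [if_pos h1k, if_neg h2k] at h
          exact h20 (hwu0 i' (by omega) h.symm)
        · exfalso
          rw [if_neg h1k, if_pos h2k] at h
          exact h10 (hwu0 i (by omega) h)
        · rw [if_neg h1k, if_neg h2k] at h
          exact hw i i' (by omega) (by omega) h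
    · -- arc injectivity
      intro i i' hi hi' h
      dsimp only at h
      by_cases h1k : i = k <;> by_cases h2k : i' = k
      · omega
      · exfalso
        rw [if_pos h1k, if_neg h2k] at h
        have h6 := (hm i' (by omega)).1
        rw [← h] at h6
        exact henotcon h6
      · exfalso
        rw [if_neg h1k, if_pos h2k] at h
        have h6 := (hm i (by omega)).1
        rw [h] at h6
        exact henotcon h6
      · rw [if_neg h1k, if_neg h2k] at h
        exact hb i i' (by omega) (by omega) h
    · -- membership and ends
      intro i hi
      dsimp only
      by_cases h1k : i = k
      · subst h1k
        rw [if_pos rfl]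
        refine ⟨he, ?_⟩
        rw [Nat.mod_self, if_neg (show ¬ i = 0 by omega), if_pos rfl, if_pos rfl]
      · rw [if_neg h1k]
        have hik : i < k := by omega
        refine ⟨(hmc i hik).1, ?_⟩
        rw [Nat.mod_eq_of_lt (show i + 1 < k + 1 by omega), Prod.ext_iff]
        constructor
        · rw [hT i hik]
          split_ifs <;> first | rfl | omega | exact absurd rfl (by omega) | exact (‹False›).elim
        · rw [hH i hik]
          split_ifs <;> first | rfl | omega | exact absurd rfl (by omega) | exact (‹False›).elim
    · -- image equality
      rw [Finset.range_add_one, Finset.image_insert]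
      rw [if_pos rfl]
      congr 1
      have himg2 : (Finset.range k).image (fun i => if i = k then e else b0 ((i + j) % k))
          = (Finset.range k).image (fun i => b0 ((i + j) % k)) := by
        apply Finset.image_congr
        intro x hx
        rw [Finset.mem_coe, Finset.mem_range] at hx
        dsimp only
        rw [if_neg (show ¬ x = k by omega)]
      rw [himg2, himg]
      exact hC'eq

lemma main_count (D : MDigraph) (e : ℕ) (he : e ∈ D.A) (hnl : ¬ D.IsLoop e) (k : ℕ) :
    cycCount D (k + 1) + cycCount (D.extractArc e) k
      = cycCount (D.delArc e) (k + 1) + cycCount (D.contractArc e) k := by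
  rw [count_del D e (k + 1), count_con D e hnl k, count_bij D e he hnl k]
  omega

end MDigraph

/-- for a non-loop arc `e = (u,v)` of `D` with no loop at `u` and
no loop at `v`, `σ(D;x) = σ(D_{-e};x) + x·σ(D_{/e};x) − x·σ(D_{†e};x)`. -/
theorem cyclePoly_deletion_contraction_extraction (D : MDigraph) (hwf : D.WellFormed)
    (e : ℕ) (he : e ∈ D.A) (hnl : ¬ D.IsLoop e)
    (hu : ∀ a ∈ D.A, D.ends a ≠ ((D.ends e).1, (D.ends e).1))
    (hv : ∀ a ∈ D.A, D.ends a ≠ ((D.ends e).2, (D.ends e).2)) :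
    D.cyclePoly = (D.delArc e).cyclePoly + Polynomial.X * (D.contractArc e).cyclePoly
      - Polynomial.X * (D.extractArc e).cyclePoly := by
  have h1 : (D.delArc e).A.card ≤ D.A.card :=
    Finset.card_le_card (Finset.erase_subset _ _)
  have h2 : (D.contractArc e).A.card ≤ D.A.card := by
    rw [MDigraph.contract_A hnl]
    exact Finset.card_filter_le _ _
  have h3 : (D.extractArc e).A.card ≤ D.A.card := by
    rw [MDigraph.extract_A]
    exact Finset.card_filter_le _ _
  rw [MDigraph.cyclePoly_ext_aux (show D.A.card ≤ D.A.card + 1 by omega),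
      MDigraph.cyclePoly_ext_aux (show (D.delArc e).A.card ≤ D.A.card + 1 by omega),
      MDigraph.cyclePoly_ext_aux (show (D.contractArc e).A.card ≤ D.A.card from h2),
      MDigraph.cyclePoly_ext_aux (show (D.extractArc e).A.card ≤ D.A.card from h3),
      MDigraph.shift_sum (fun k => MDigraph.cycCount (D.contractArc e) k) (D.A.card + 1),
      MDigraph.shift_sum (fun k => MDigraph.cycCount (D.extractArc e) k) (D.A.card + 1),
      eq_sub_iff_add_eq, ← Finset.sum_add_distrib, ← Finset.sum_add_distrib]
  apply Finset.sum_congr rfl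
  intro k _
  rw [← add_smul, ← add_smul]
  congr 1
  cases k with
  | zero => simp [MDigraph.cycCount_zero]
  | succ m =>
    rw [if_neg (Nat.succ_ne_zero m), if_neg (Nat.succ_ne_zero m), Nat.add_sub_cancel]
    have hmain := MDigraph.main_count D e he hnl m
    exact_mod_cast congrArg (Nat.cast (R := ℝ)) hmain
end

section
/- Let D be a finite multidigraph and let e=(u,v) be a non-loop arc of D. Then π(D;x) = π(D_{-e};x) + x·π(D_{/e};x) − x·π(D_{†e};x) + x. -/
open Classical

namespace MDigraph

lemma isPath_card (D : MDigraph) {P : Finset ℕ} {k : ℕ} (h : IsPath D P k) : P.card = k := by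
  obtain ⟨hk, v, a, hv, ha, harc, rfl⟩ := h
  rw [Finset.card_image_of_injOn, Finset.card_range]
  intro i hi j hj hij
  exact ha i j (Finset.mem_range.1 hi) (Finset.mem_range.1 hj) hij

lemma pathCount_eq_zero (D : MDigraph) {k : ℕ} (h : D.A.card < k) : pathCount D k = 0 := by
  rw [pathCount, Finset.card_eq_zero, Finset.filter_eq_empty_iff]
  intro P hP hPath
  have h1 := isPath_card D hPath
  have h2 : P.card ≤ D.A.card := Finset.card_le_card (Finset.mem_powerset.1 hP)
  omega

lemma pathCount_zero (D : MDigraph) : pathCount D 0 = 0 := by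
  rw [pathCount, Finset.card_eq_zero, Finset.filter_eq_empty_iff]
  intro P hP hPath; exact absurd hPath.1 (by omega)

lemma coeff_pathPoly (D : MDigraph) (n : ℕ) : (pathPoly D).coeff n = pathCount D n := by
  rw [pathPoly]
  simp only [Polynomial.finset_sum_coeff, Polynomial.coeff_smul, Polynomial.coeff_X_pow,
    smul_eq_mul, mul_ite, mul_one, mul_zero]
  rw [Finset.sum_ite_eq (Finset.range (D.A.card + 1)) n (fun k => (pathCount D k : ℝ))]
  split_ifs with h
  · rfl
  · rw [Finset.mem_range, not_lt] at h
    rw [pathCount_eq_zero D (by omega)]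
    simp

lemma pathCount_delArc (D : MDigraph) (e : ℕ) (k : ℕ) :
    pathCount D k = pathCount (delArc D e) k
      + (D.A.powerset.filter (fun P => IsPath D P k ∧ e ∈ P)).card := by
  have hsplit := Finset.card_filter_add_card_filter_not
    (s := D.A.powerset.filter (fun P => IsPath D P k)) (p := fun P => e ∈ P)
  rw [Finset.filter_filter, Finset.filter_filter] at hsplit
  have hset : (delArc D e).A.powerset.filter (fun P => IsPath (delArc D e) P k)
      = D.A.powerset.filter (fun P => IsPath D P k ∧ ¬ e ∈ P) := by
    ext P
    simp only [Finset.mem_filter, Finset.mem_powerset]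
    constructor
    · rintro ⟨hPA, hk, v, a, hv, ha, harc, rfl⟩
      have hsub : D.A.erase e ⊆ D.A := Finset.erase_subset e D.A
      refine ⟨hPA.trans hsub, ⟨hk, v, a, hv, ha, fun i hi => ⟨hsub (harc i hi).1, (harc i hi).2⟩, rfl⟩, ?_⟩
      intro hcon
      exact (Finset.mem_erase.1 (hPA hcon)).1 rfl
    · rintro ⟨hPA, ⟨hk, v, a, hv, ha, harc, hPimg⟩, heP⟩
      refine ⟨Finset.subset_erase.2 ⟨hPA, heP⟩, hk, v, a, hv, ha, fun i hi => ⟨?_, (harc i hi).2⟩, hPimg⟩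
      refine Finset.mem_erase.2 ⟨?_, (harc i hi).1⟩
      intro hcon
      apply heP
      rw [hPimg]
      exact hcon ▸ Finset.mem_image.2 ⟨i, Finset.mem_range.2 hi, rfl⟩
  rw [pathCount, pathCount, hset, ← hsplit]
  omega

end MDigraph
namespace MDigraph

lemma contractArc_A (D : MDigraph) (e : ℕ) (hnl : ¬ D.IsLoop e) :
    (D.contractArc e).A
      = D.A.filter (fun a => (D.ends a).1 ≠ (D.ends e).1 ∧ (D.ends a).2 ≠ (D.ends e).2) := by
  simp only [contractArc]
  rw [if_neg (show (D.ends e).1 ≠ (D.ends e).2 from hnl)]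

lemma contractArc_ends (D : MDigraph) (e : ℕ) (hnl : ¬ D.IsLoop e) (a : ℕ) :
    (D.contractArc e).ends a
      = ((if (D.ends a).1 = (D.ends e).2 then (D.ends e).1 else (D.ends a).1),
         (if (D.ends a).2 = (D.ends e).2 then (D.ends e).1 else (D.ends a).2)) := by
  simp only [contractArc]
  rw [if_neg (show (D.ends e).1 ≠ (D.ends e).2 from hnl)]

lemma qcount_one (D : MDigraph) (e : ℕ) (he : e ∈ D.A) (hnl : ¬ D.IsLoop e) :
    (D.A.powerset.filter (fun P => IsPath D P 1 ∧ e ∈ P)).card = 1 := by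
  rw [Finset.card_eq_one]
  refine ⟨{e}, ?_⟩
  ext P
  simp only [Finset.mem_filter, Finset.mem_powerset, Finset.mem_singleton]
  constructor
  · rintro ⟨hPA, ⟨hk, v, a, hv, ha, harc, rfl⟩, heP⟩
    simp only [Finset.range_one, Finset.image_singleton, Finset.mem_singleton] at heP ⊢
    rw [heP]
  · rintro rfl
    refine ⟨Finset.singleton_subset_iff.2 he,
      ⟨le_refl 1, fun i => if i = 0 then (D.ends e).1 else (D.ends e).2, fun _ => e,
        ?_, ?_, ?_, ?_⟩, Finset.mem_singleton_self e⟩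
    · intro i j hi hj hij
      interval_cases i <;> interval_cases j <;> simp_all [IsLoop]
    · intro i j hi hj _; omega
    · intro i hi
      interval_cases i
      simp [he]
    · simp

end MDigraph
namespace MDigraph

lemma push_path (D : MDigraph) (e : ℕ) (hnl : ¬ D.IsLoop e) {P : Finset ℕ} {k : ℕ}
    (hk : 1 ≤ k) (hP : IsPath D P (k+1)) (heP : e ∈ P) :
    P.erase e ⊆ (D.contractArc e).A ∧ IsPath (D.contractArc e) (P.erase e) k ∧
      ∃ b ∈ P.erase e, ((D.contractArc e).ends b).1 = (D.ends e).1 ∨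
        ((D.contractArc e).ends b).2 = (D.ends e).1 := by
  obtain ⟨-, vv, aa, hvinj, hainj, harc, hPimg⟩ := hP
  obtain ⟨j, hjlt, hje⟩ : ∃ j, j < k+1 ∧ aa j = e := by
    rw [hPimg] at heP
    obtain ⟨j, hj, hje⟩ := Finset.mem_image.1 heP
    exact ⟨j, Finset.mem_range.1 hj, hje⟩
  have he2 : D.ends e = (vv j, vv (j+1)) := hje ▸ (harc j hjlt).2
  have hvj : vv j = (D.ends e).1 := by rw [he2]
  have hvj1 : vv (j+1) = (D.ends e).2 := by rw [he2]
  have htl : ∀ i, i < k+1 → (D.ends (aa i)).1 = vv i := fun i hi => by rw [(harc i hi).2]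
  have hhd : ∀ i, i < k+1 → (D.ends (aa i)).2 = vv (i+1) := fun i hi => by rw [(harc i hi).2]
  have hmem : ∀ i, i < k+1 → i ≠ j → aa i ∈ (D.contractArc e).A := by
    intro i hi hij
    rw [contractArc_A D e hnl, Finset.mem_filter]
    refine ⟨(harc i hi).1, ?_, ?_⟩
    · rw [htl i hi]
      intro hcon
      exact hij (hvinj i j (by omega) (by omega) (hcon.trans hvj.symm))
    · rw [hhd i hi]
      intro hcon
      have := hvinj (i+1) (j+1) (by omega) (by omega) (hcon.trans hvj1.symm)
      omega
  have hCends : ∀ i, i < k+1 → i ≠ j →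
      (D.contractArc e).ends (aa i) = ((if i = j+1 then vv j else vv i), vv (i+1)) := by
    intro i hi hij
    rw [contractArc_ends D e hnl, htl i hi, hhd i hi]
    have h1 : vv i = (D.ends e).2 ↔ i = j+1 :=
      ⟨fun h => hvinj i (j+1) (by omega) (by omega) (h.trans hvj1.symm), fun h => h ▸ hvj1⟩
    have h2 : ¬ (vv (i+1) = (D.ends e).2) := by
      intro h
      have := hvinj (i+1) (j+1) (by omega) (by omega) (h.trans hvj1.symm)
      omega
    rw [if_neg h2]
    by_cases hc : i = j+1
    · rw [if_pos (h1.2 hc), if_pos hc, hvj]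
    · rw [if_neg (fun h => hc (h1.1 h)), if_neg hc]
  have himg : P.erase e = Finset.image (fun i => if i < j then aa i else aa (i+1)) (Finset.range k) := by
    ext x
    simp only [Finset.mem_erase, hPimg, Finset.mem_image, Finset.mem_range]
    constructor
    · rintro ⟨hxe, i, hi, rfl⟩
      have hij : i ≠ j := fun h => hxe (by rw [h, hje])
      rcases lt_or_gt_of_ne hij with hc | hc
      · exact ⟨i, by omega, by rw [if_pos hc]⟩
      · refine ⟨i-1, by omega, ?_⟩
        try dsimp only
        rw [if_neg (show ¬ i-1 < j by omega)]
        congr 1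
        omega
    · rintro ⟨i, hi, rfl⟩
      try dsimp only
      by_cases hc : i < j
      · rw [if_pos hc]
        refine ⟨?_, i, by omega, rfl⟩
        intro h
        exact absurd (hainj i j (by omega) (by omega) (h.trans hje.symm)) (by omega)
      · rw [if_neg hc]
        refine ⟨?_, i+1, by omega, rfl⟩
        intro h
        exact absurd (hainj (i+1) j (by omega) (by omega) (h.trans hje.symm)) (by omega)
  have hsub : P.erase e ⊆ (D.contractArc e).A := by
    intro x hx
    rw [himg] at hx
    obtain ⟨i, hi, rfl⟩ := Finset.mem_image.1 hx
    rw [Finset.mem_range] at hi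
    try dsimp only
    by_cases hc : i < j
    · rw [if_pos hc]; exact hmem i (by omega) (by omega)
    · rw [if_neg hc]; exact hmem (i+1) (by omega) (by omega)
  refine ⟨hsub, ⟨hk, fun i => if i ≤ j then vv i else vv (i+1),
    fun i => if i < j then aa i else aa (i+1), ?_, ?_, ?_, himg⟩, ?_⟩
  · intro i1 i2 h1 h2 heq
    dsimp only at heq
    split_ifs at heq <;>
      first
        | omega
        | (have := hvinj _ _ (by omega) (by omega) heq; omega)
  · intro i1 i2 h1 h2 heq
    dsimp only at heq
    split_ifs at heq <;>
      first
        | omega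
        | (have := hainj _ _ (by omega) (by omega) heq; omega)
  · intro i hi
    try dsimp only
    constructor
    · by_cases hc : i < j
      · rw [if_pos hc]; exact hmem i (by omega) (by omega)
      · rw [if_neg hc]; exact hmem (i+1) (by omega) (by omega)
    · rcases lt_trichotomy i j with hc | hc | hc
      · rw [if_pos hc, hCends i (by omega) (by omega), if_neg (show ¬ i = j+1 by omega),
          if_pos (show i ≤ j by omega), if_pos (show i+1 ≤ j by omega)]
      · rw [if_neg (show ¬ i < j by omega), hCends (i+1) (by omega) (by omega),
          if_pos (show i+1 = j+1 by omega), if_pos (show i ≤ j by omega),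
          if_neg (show ¬ i+1 ≤ j by omega), hc]
      · rw [if_neg (show ¬ i < j by omega), hCends (i+1) (by omega) (by omega),
          if_neg (show ¬ i+1 = j+1 by omega), if_neg (show ¬ i ≤ j by omega),
          if_neg (show ¬ i+1 ≤ j by omega)]
  · by_cases hc : j < k
    · refine ⟨aa (j+1), Finset.mem_erase.2 ⟨?_, ?_⟩, Or.inl ?_⟩
      · intro h
        exact absurd (hainj (j+1) j (by omega) (by omega) (h.trans hje.symm)) (by omega)
      · rw [hPimg]
        exact Finset.mem_image.2 ⟨j+1, Finset.mem_range.2 (by omega), rfl⟩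
      · rw [hCends (j+1) (by omega) (by omega), if_pos rfl]
        exact hvj
    · refine ⟨aa (j-1), Finset.mem_erase.2 ⟨?_, ?_⟩, Or.inr ?_⟩
      · intro h
        exact absurd (hainj (j-1) j (by omega) (by omega) (h.trans hje.symm)) (by omega)
      · rw [hPimg]
        exact Finset.mem_image.2 ⟨j-1, Finset.mem_range.2 (by omega), rfl⟩
      · rw [hCends (j-1) (by omega) (by omega)]
        show vv (j-1+1) = (D.ends e).1
        rw [show j-1+1 = j by omega, hvj]

end MDigraph
namespace MDigraph

lemma contract_ends_eq (D : MDigraph) (e : ℕ) (hnl : ¬ D.IsLoop e) {b : ℕ}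
    (hb : b ∈ (D.contractArc e).A)
    (h1 : ((D.contractArc e).ends b).1 ≠ (D.ends e).1)
    (h2 : ((D.contractArc e).ends b).2 ≠ (D.ends e).1) :
    b ∈ (D.extractArc e).A ∧ (D.contractArc e).ends b = D.ends b := by
  rw [contractArc_A D e hnl, Finset.mem_filter] at hb
  obtain ⟨hbA, hbt, hbh⟩ := hb
  rw [contractArc_ends D e hnl] at h1 h2 ⊢
  by_cases hc1 : (D.ends b).1 = (D.ends e).2
  · rw [if_pos hc1] at h1
    exact absurd rfl h1
  · rw [if_neg hbh] at h2
    refine ⟨?_, ?_⟩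
    · show b ∈ D.A.filter _
      rw [Finset.mem_filter]
      exact ⟨hbA, hbt, hc1, h2, hbh⟩
    · rw [if_neg hc1, if_neg hbh]

lemma extract_mem_contract (D : MDigraph) (e : ℕ) (hnl : ¬ D.IsLoop e) {b : ℕ}
    (hb : b ∈ (D.extractArc e).A) :
    b ∈ (D.contractArc e).A ∧ (D.contractArc e).ends b = D.ends b := by
  have hb' : b ∈ D.A.filter (fun a =>
      (D.ends a).1 ≠ (D.ends e).1 ∧ (D.ends a).1 ≠ (D.ends e).2 ∧
      (D.ends a).2 ≠ (D.ends e).1 ∧ (D.ends a).2 ≠ (D.ends e).2) := hb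
  rw [Finset.mem_filter] at hb'
  obtain ⟨hbA, c1, c2, c3, c4⟩ := hb'
  refine ⟨?_, ?_⟩
  · rw [contractArc_A D e hnl, Finset.mem_filter]
    exact ⟨hbA, c1, c4⟩
  · rw [contractArc_ends D e hnl, if_neg c2, if_neg c4]

lemma lift_path (D : MDigraph) (e : ℕ) (he : e ∈ D.A) (hnl : ¬ D.IsLoop e) {P : Finset ℕ} {k : ℕ}
    (hk : 1 ≤ k) (hPA : P ⊆ (D.contractArc e).A)
    (hP : IsPath (D.contractArc e) P k)
    (htouch : ∃ b ∈ P, ((D.contractArc e).ends b).1 = (D.ends e).1 ∨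
      ((D.contractArc e).ends b).2 = (D.ends e).1) :
    e ∉ P ∧ insert e P ⊆ D.A ∧ IsPath D (insert e P) (k+1) := by
  have heC : e ∉ (D.contractArc e).A := by
    rw [contractArc_A D e hnl, Finset.mem_filter]
    rintro ⟨-, h, -⟩
    exact h rfl
  have heP : e ∉ P := fun h => heC (hPA h)
  obtain ⟨-, v', a', hvinj, hainj, harc, hPimg⟩ := hP
  have haP : ∀ i, i < k → a' i ∈ P := fun i hi => by
    rw [hPimg]; exact Finset.mem_image.2 ⟨i, Finset.mem_range.2 hi, rfl⟩
  have hane : ∀ i, i < k → a' i ≠ e := fun i hi h => heC (h ▸ hPA (haP i hi))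
  have hAf : ∀ i, i < k → a' i ∈ D.A ∧ (D.ends (a' i)).1 ≠ (D.ends e).1 ∧
      (D.ends (a' i)).2 ≠ (D.ends e).2 := by
    intro i hi
    have h := hPA (haP i hi)
    rw [contractArc_A D e hnl, Finset.mem_filter] at h
    exact ⟨h.1, h.2⟩
  have hren : ∀ i, i < k →
      ((if (D.ends (a' i)).1 = (D.ends e).2 then (D.ends e).1 else (D.ends (a' i)).1) = v' i
      ∧ (if (D.ends (a' i)).2 = (D.ends e).2 then (D.ends e).1 else (D.ends (a' i)).2) = v' (i+1)) := by
    intro i hi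
    have h := (harc i hi).2
    rw [contractArc_ends D e hnl] at h
    exact ⟨congrArg Prod.fst h, congrArg Prod.snd h⟩
  have hhd : ∀ i, i < k → (D.ends (a' i)).2 = v' (i+1) := by
    intro i hi
    have h := (hren i hi).2
    rwa [if_neg (hAf i hi).2.2] at h
  have htl : ∀ i, i < k →
      (D.ends (a' i)).1 = (if v' i = (D.ends e).1 then (D.ends e).2 else v' i) := by
    intro i hi
    have h := (hren i hi).1
    by_cases hc : (D.ends (a' i)).1 = (D.ends e).2
    · rw [if_pos hc] at h
      rw [if_pos h.symm]
      exact hc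
    · rw [if_neg hc] at h
      rw [if_neg (fun hu => (hAf i hi).2.1 (h.trans hu))]
      exact h
  have hvnev : ∀ i, i ≤ k → v' i ≠ (D.ends e).2 := by
    intro i hi hcon
    rcases Nat.lt_or_ge i k with hik | hik
    · have h := (hren i hik).1
      rw [hcon] at h
      by_cases hc : (D.ends (a' i)).1 = (D.ends e).2
      · rw [if_pos hc] at h
        exact hnl h
      · rw [if_neg hc] at h
        exact hc h
    · have hik' : i = k := by omega
      have h := (hren (k-1) (by omega)).2
      rw [show k-1+1 = k by omega] at h
      rw [hik'] at hcon
      rw [hcon] at h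
      by_cases hc : (D.ends (a' (k-1))).2 = (D.ends e).2
      · rw [if_pos hc] at h
        exact hnl h
      · rw [if_neg hc] at h
        exact hc h
  obtain ⟨b, hbP, hb⟩ := htouch
  obtain ⟨i0, hi0, rfl⟩ : ∃ i0, i0 < k ∧ a' i0 = b := by
    rw [hPimg] at hbP
    obtain ⟨i0, h1, h2⟩ := Finset.mem_image.1 hbP
    exact ⟨i0, Finset.mem_range.1 h1, h2⟩
  obtain ⟨j, hjk, hvj⟩ : ∃ j, j ≤ k ∧ v' j = (D.ends e).1 := by
    rcases hb with hb | hb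
    · refine ⟨i0, by omega, ?_⟩
      rw [(harc i0 hi0).2] at hb
      exact hb
    · refine ⟨i0+1, by omega, ?_⟩
      rw [(harc i0 hi0).2] at hb
      exact hb
  have hD : ∀ i, i < k →
      D.ends (a' i) = ((if i = j then (D.ends e).2 else v' i), v' (i+1)) := by
    intro i hi
    have hiff : v' i = (D.ends e).1 ↔ i = j :=
      ⟨fun h => hvinj i j (by omega) hjk (h.trans hvj.symm), fun h => h ▸ hvj⟩
    have heta : D.ends (a' i) = ((D.ends (a' i)).1, (D.ends (a' i)).2) := rfl
    rw [heta, htl i hi, hhd i hi]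
    by_cases hc : i = j
    · rw [if_pos (hiff.2 hc), if_pos hc]
    · rw [if_neg (fun h => hc (hiff.1 h)), if_neg hc]
  refine ⟨heP, ?_, (by omega : 1 ≤ k+1),
    fun i => if i ≤ j then v' i else if i = j+1 then (D.ends e).2 else v' (i-1),
    fun i => if i < j then a' i else if i = j then e else a' (i-1), ?_, ?_, ?_, ?_⟩
  · refine Finset.insert_subset he (hPA.trans ?_)
    rw [contractArc_A D e hnl]
    exact Finset.filter_subset _ _
  · intro i1 i2 h1 h2 heq
    dsimp only at heq
    split_ifs at heq <;>
      first
        | omega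
        | (have := hvinj _ _ (by omega) (by omega) heq; omega)
        | (exact absurd heq (hvnev _ (by omega)))
        | (exact absurd heq.symm (hvnev _ (by omega)))
  · intro i1 i2 h1 h2 heq
    dsimp only at heq
    split_ifs at heq <;>
      first
        | omega
        | (have := hainj _ _ (by omega) (by omega) heq; omega)
        | (exact absurd heq (hane _ (by omega)))
        | (exact absurd heq.symm (hane _ (by omega)))
  · intro i hi
    try dsimp only
    rcases lt_trichotomy i j with hc | hc | hc
    · rw [if_pos hc]
      refine ⟨(hAf i (by omega)).1, ?_⟩
      rw [hD i (by omega), if_neg (show ¬ i = j by omega), if_pos (show i ≤ j by omega),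
        if_pos (show i+1 ≤ j by omega)]
    · rw [if_neg (show ¬ i < j by omega), if_pos hc]
      refine ⟨he, ?_⟩
      rw [if_pos (show i ≤ j by omega), if_neg (show ¬ i+1 ≤ j by omega),
        if_pos (show i+1 = j+1 by omega), show v' i = (D.ends e).1 by rw [hc]; exact hvj]
    · rw [if_neg (show ¬ i < j by omega), if_neg (show ¬ i = j by omega)]
      refine ⟨(hAf (i-1) (by omega)).1, ?_⟩
      rw [hD (i-1) (by omega), show i-1+1 = i by omega, show i+1-1 = i by omega,
        if_neg (show ¬ i ≤ j by omega), if_neg (show ¬ i+1 ≤ j by omega),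
        if_neg (show ¬ i+1 = j+1 by omega)]
      by_cases hc2 : i = j+1
      · rw [if_pos (show i-1 = j by omega), if_pos hc2]
      · rw [if_neg (show ¬ i-1 = j by omega), if_neg hc2]
  · ext x
    simp only [Finset.mem_insert, hPimg, Finset.mem_image, Finset.mem_range]
    constructor
    · rintro (rfl | ⟨i, hi, rfl⟩)
      · exact ⟨j, by omega, by rw [if_neg (lt_irrefl j), if_pos rfl]⟩
      · by_cases hc : i < j
        · exact ⟨i, by omega, by rw [if_pos hc]⟩
        · exact ⟨i+1, by omega, by
            rw [if_neg (show ¬ i+1 < j by omega), if_neg (show ¬ i+1 = j by omega),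
              show i+1-1 = i from rfl]⟩
    · rintro ⟨i, hi, rfl⟩
      try dsimp only
      rcases lt_trichotomy i j with hc | hc | hc
      · rw [if_pos hc]
        exact Or.inr ⟨i, by omega, rfl⟩
      · rw [if_neg (show ¬ i < j by omega), if_pos hc]
        exact Or.inl rfl
      · rw [if_neg (show ¬ i < j by omega), if_neg (show ¬ i = j by omega)]
        exact Or.inr ⟨i-1, by omega, rfl⟩

end MDigraph
namespace MDigraph

lemma pathCount_contract (D : MDigraph) (e : ℕ) (he : e ∈ D.A) (hnl : ¬ D.IsLoop e)
    (k : ℕ) (hk : 1 ≤ k) :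
    pathCount (D.contractArc e) k
      = (D.A.powerset.filter (fun P => IsPath D P (k+1) ∧ e ∈ P)).card
        + pathCount (D.extractArc e) k := by
  classical
  have hsplit := Finset.card_filter_add_card_filter_not
    (s := (D.contractArc e).A.powerset.filter (fun P => IsPath (D.contractArc e) P k))
    (p := fun P => ∃ b ∈ P, ((D.contractArc e).ends b).1 = (D.ends e).1 ∨
      ((D.contractArc e).ends b).2 = (D.ends e).1)
  rw [pathCount, ← hsplit]
  congr 1
  · -- touched part = paths through e
    apply Finset.card_bij' (i := fun P _ => insert e P) (j := fun P _ => P.erase e)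
    · -- left inverse
      intro P hP
      rw [Finset.mem_filter, Finset.mem_filter, Finset.mem_powerset] at hP
      have heC : e ∉ (D.contractArc e).A := by
        rw [contractArc_A D e hnl, Finset.mem_filter]
        rintro ⟨-, h, -⟩
        exact h rfl
      exact Finset.erase_insert (fun h => heC (hP.1.1 h))
    · -- right inverse
      intro P hP
      rw [Finset.mem_filter] at hP
      exact Finset.insert_erase hP.2.2
    · -- hi
      intro P hP
      rw [Finset.mem_filter, Finset.mem_filter, Finset.mem_powerset] at hP
      obtain ⟨⟨hPA, hPath⟩, htouch⟩ := hP
      obtain ⟨heP, hsub, hpath⟩ := lift_path D e he hnl hk hPA hPath htouch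
      rw [Finset.mem_filter, Finset.mem_powerset]
      exact ⟨hsub, hpath, Finset.mem_insert_self e P⟩
    · -- hj
      intro P hP
      rw [Finset.mem_filter, Finset.mem_powerset] at hP
      obtain ⟨hPA, hPath, heP⟩ := hP
      obtain ⟨hsub, hpath, htouch⟩ := push_path D e hnl hk hPath heP
      rw [Finset.mem_filter, Finset.mem_filter, Finset.mem_powerset]
      exact ⟨⟨hsub, hpath⟩, htouch⟩
  · -- untouched part = extract paths
    rw [pathCount]
    congr 1
    ext P
    simp only [Finset.mem_filter, Finset.mem_powerset]
    constructor
    · rintro ⟨⟨hPA, hk', v', a', hvinj, hainj, harc, hPimg⟩, hnt⟩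
      push_neg at hnt
      have haP : ∀ i, i < k → a' i ∈ P := fun i hi => by
        rw [hPimg]; exact Finset.mem_image.2 ⟨i, Finset.mem_range.2 hi, rfl⟩
      have key : ∀ i, i < k → a' i ∈ (D.extractArc e).A ∧
          (D.contractArc e).ends (a' i) = D.ends (a' i) := by
        intro i hi
        have hnti := hnt (a' i) (haP i hi)
        exact contract_ends_eq D e hnl (hPA (haP i hi)) hnti.1 hnti.2
      refine ⟨?_, hk', v', a', hvinj, hainj, fun i hi => ⟨(key i hi).1, ?_⟩, hPimg⟩
      · intro x hx
        rw [hPimg] at hx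
        obtain ⟨i, hi, rfl⟩ := Finset.mem_image.1 hx
        exact (key i (Finset.mem_range.1 hi)).1
      · have h := (harc i hi).2
        rw [(key i hi).2] at h
        exact h
    · rintro ⟨hPA, hk', v', a', hvinj, hainj, harc, hPimg⟩
      have haP : ∀ i, i < k → a' i ∈ P := fun i hi => by
        rw [hPimg]; exact Finset.mem_image.2 ⟨i, Finset.mem_range.2 hi, rfl⟩
      have key : ∀ i, i < k → a' i ∈ (D.contractArc e).A ∧
          (D.contractArc e).ends (a' i) = D.ends (a' i) :=
        fun i hi => extract_mem_contract D e hnl (hPA (haP i hi))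
      refine ⟨⟨?_, hk', v', a', hvinj, hainj, fun i hi => ⟨(key i hi).1, ?_⟩, hPimg⟩, ?_⟩
      · intro x hx
        rw [hPimg] at hx
        obtain ⟨i, hi, rfl⟩ := Finset.mem_image.1 hx
        exact (key i (Finset.mem_range.1 hi)).1
      · rw [(key i hi).2]
        exact (harc i hi).2
      · rintro ⟨b, hbP, hb⟩
        rw [hPimg] at hbP
        obtain ⟨i, hi, rfl⟩ := Finset.mem_image.1 hbP
        rw [Finset.mem_range] at hi
        have hE : a' i ∈ D.A.filter (fun a =>
            (D.ends a).1 ≠ (D.ends e).1 ∧ (D.ends a).1 ≠ (D.ends e).2 ∧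
            (D.ends a).2 ≠ (D.ends e).1 ∧ (D.ends a).2 ≠ (D.ends e).2) := hPA (haP i hi)
        rw [Finset.mem_filter] at hE
        rw [(key i hi).2] at hb
        rcases hb with hb | hb
        · exact hE.2.1 hb
        · exact hE.2.2.2.1 hb

end MDigraph
/-- for a non-loop arc `e = (u,v)` of `D`,
`π(D;x) = π(D_{-e};x) + x·π(D_{/e};x) − x·π(D_{†e};x) + x`. -/
theorem pathPoly_deletion_contraction_extraction (D : MDigraph) (hwf : D.WellFormed)
    (e : ℕ) (he : e ∈ D.A) (hnl : ¬ D.IsLoop e) :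
    D.pathPoly = (D.delArc e).pathPoly + Polynomial.X * (D.contractArc e).pathPoly
      - Polynomial.X * (D.extractArc e).pathPoly + Polynomial.X := by
  open MDigraph in
  ext n
  rw [Polynomial.coeff_add, Polynomial.coeff_sub, Polynomial.coeff_add]
  rcases n with _ | m
  · simp [coeff_pathPoly, pathCount_zero, Polynomial.mul_coeff_zero, Polynomial.coeff_X_zero]
  · rw [Polynomial.coeff_X_mul, Polynomial.coeff_X_mul, coeff_pathPoly, coeff_pathPoly,
      coeff_pathPoly, coeff_pathPoly, Polynomial.coeff_X]
    rcases Nat.eq_zero_or_pos m with rfl | hm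
    · rw [if_pos rfl, pathCount_delArc D e 1, qcount_one D e he hnl,
        pathCount_zero, pathCount_zero]
      norm_num
    · rw [if_neg (by omega : ¬ (1 : ℕ) = m + 1)]
      have h3 := pathCount_contract D e he hnl m hm
      have h1 := pathCount_delArc D e (m+1)
      rw [h1, h3]
      push_cast
      ring
end
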